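/- arXiv:1306.0203 — 2 statements merged into one kernel-verified Lean document; each statement's English description precedes it below -/
import Mathlib

section
/- Let α>0, n = ⌊α⌋+1, and x ∈ Cⁿ[a,b]. Then for every t ∈ [a,b], (_aI_t^α (^C_aD^α x))(t) = x(t) − Σ_{k=0}^{n−1} [x^{(k)}(a)/k!] (t−a)^k. -/
open MeasureTheory intervalIntegral Set

lemma real_beta {u v : ℝ} (hu : 0 < u) (hv : 0 < v) :
    ∫ x in (0:ℝ)..1, x ^ (u - 1) * (1 - x) ^ (v - 1) =
      Real.Gamma u * Real.Gamma v / Real.Gamma (u + v) := by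
  have h := Complex.Gamma_mul_Gamma_eq_betaIntegral (s := (u:ℂ)) (t := (v:ℂ))
    (by simpa using hu) (by simpa using hv)
  have hbeta : Complex.betaIntegral u v =
      ((∫ x in (0:ℝ)..1, x ^ (u - 1) * (1 - x) ^ (v - 1) : ℝ) : ℂ) := by
    rw [Complex.betaIntegral, ← intervalIntegral.integral_ofReal]
    apply intervalIntegral.integral_congr
    intro x hx
    rw [Set.uIcc_of_le (by norm_num : (0:ℝ) ≤ 1)] at hx
    have e1 : ((u:ℂ) - 1) = ((u - 1 : ℝ) : ℂ) := by push_cast; ring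
    have e2 : ((v:ℂ) - 1) = ((v - 1 : ℝ) : ℂ) := by push_cast; ring
    simp only [e1, e2]
    rw [show ((1:ℂ) - (x:ℝ)) = (((1 - x : ℝ)):ℂ) by push_cast; ring,
      ← Complex.ofReal_cpow hx.1, ← Complex.ofReal_cpow (by linarith [hx.2]),
      ← Complex.ofReal_mul]
  rw [hbeta, ← Complex.ofReal_add, Complex.Gamma_ofReal, Complex.Gamma_ofReal,
    Complex.Gamma_ofReal, ← Complex.ofReal_mul, ← Complex.ofReal_mul] at h
  have h' : Real.Gamma u * Real.Gamma v =
      Real.Gamma (u + v) * ∫ x in (0:ℝ)..1, x ^ (u - 1) * (1 - x) ^ (v - 1) :=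
    mod_cast h
  have hne : Real.Gamma (u + v) ≠ 0 := (Real.Gamma_pos_of_pos (by linarith)).ne'
  field_simp [hne] at h' ⊢
  linarith [h']

lemma kernel_integral {α β s t : ℝ} (hst : s < t) (hα : 0 < α) (hβ : 0 < β) :
    ∫ τ in s..t, (t - τ) ^ (α - 1) * (τ - s) ^ (β - 1) =
      Real.Gamma α * Real.Gamma β / Real.Gamma (α + β) * (t - s) ^ (α + β - 1) := by
  have hc : (0:ℝ) < t - s := by linarith
  have h1 := intervalIntegral.integral_comp_add_mul
    (f := fun τ => (t - τ) ^ (α - 1) * (τ - s) ^ (β - 1)) (a := 0) (b := 1) hc.ne' s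
  simp only [mul_zero, add_zero, mul_one, smul_eq_mul, show s + (t - s) = t by ring] at h1
  have h1' : ∫ τ in s..t, (t - τ) ^ (α - 1) * (τ - s) ^ (β - 1)
      = (t - s) * ∫ x in (0:ℝ)..1,
          (t - (s + (t - s) * x)) ^ (α - 1) * ((s + (t - s) * x) - s) ^ (β - 1) := by
    rw [h1]; field_simp
  rw [h1']
  have h2 : ∫ x in (0:ℝ)..1,
        (t - (s + (t - s) * x)) ^ (α - 1) * ((s + (t - s) * x) - s) ^ (β - 1)
      = ∫ x in (0:ℝ)..1,
          ((t - s) ^ (α - 1) * (t - s) ^ (β - 1)) * (x ^ (β - 1) * (1 - x) ^ (α - 1)) := by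
    apply intervalIntegral.integral_congr
    intro x hx
    rw [Set.uIcc_of_le (by norm_num : (0:ℝ) ≤ 1)] at hx
    have e1 : t - (s + (t - s) * x) = (t - s) * (1 - x) := by ring
    have e2 : (s + (t - s) * x) - s = (t - s) * x := by ring
    show (t - (s + (t - s) * x)) ^ (α - 1) * ((s + (t - s) * x) - s) ^ (β - 1) = _
    rw [e1, e2, Real.mul_rpow hc.le (by linarith [hx.2]), Real.mul_rpow hc.le hx.1]
    ring
  rw [h2, intervalIntegral.integral_const_mul, real_beta hβ hα]
  have e3 : (t - s) * ((t - s) ^ (α - 1) * (t - s) ^ (β - 1)) = (t - s) ^ (α + β - 1) := by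
    calc (t - s) * ((t - s) ^ (α - 1) * (t - s) ^ (β - 1))
        = (t - s) ^ (1:ℝ) * (t - s) ^ (α - 1 + (β - 1)) := by
          rw [Real.rpow_one, Real.rpow_add hc]
      _ = (t - s) ^ (1 + (α - 1 + (β - 1))) := (Real.rpow_add hc _ _).symm
      _ = (t - s) ^ (α + β - 1) := by ring_nf
  calc (t - s) * ((t - s) ^ (α - 1) * (t - s) ^ (β - 1) *
        (Real.Gamma β * Real.Gamma α / Real.Gamma (β + α)))
      = ((t - s) * ((t - s) ^ (α - 1) * (t - s) ^ (β - 1))) *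
        (Real.Gamma β * Real.Gamma α / Real.Gamma (β + α)) := by ring
    _ = Real.Gamma α * Real.Gamma β / Real.Gamma (α + β) * (t - s) ^ (α + β - 1) := by
        rw [e3, add_comm β α]; ring

lemma caputo_taylor_integral_remainder {a b t : ℝ} {n : ℕ} (hn : 0 < n) (hab : a < b)
    {x : ℝ → ℝ} (hx : ContDiffOn ℝ n x (Set.Icc a b)) (ht : t ∈ Set.Icc a b) :
    ∫ s in a..t, ((Nat.factorial (n - 1) : ℝ)⁻¹ * (t - s) ^ (n - 1)) *
        iteratedDerivWithin n x (Set.Icc a b) s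
      = x t - ∑ k ∈ Finset.range n,
          iteratedDerivWithin k x (Set.Icc a b) a / (Nat.factorial k : ℝ) * (t - a) ^ k := by
  obtain ⟨m, rfl⟩ : ∃ m, n = m + 1 := ⟨n - 1, (Nat.succ_pred_eq_of_pos hn).symm⟩
  simp only [Nat.add_sub_cancel]
  have hunique : UniqueDiffOn ℝ (Set.Icc a b) := uniqueDiffOn_Icc hab
  have hxm : ContDiffOn ℝ m x (Set.Icc a b) := hx.of_le (by exact_mod_cast m.le_succ)
  have hdiff : DifferentiableOn ℝ (iteratedDerivWithin m x (Set.Icc a b)) (Set.Ioo a b) :=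
    (hx.differentiableOn_iteratedDerivWithin (by exact_mod_cast m.lt_succ_self) hunique).mono
      Set.Ioo_subset_Icc_self
  have hcontN : ContinuousOn (iteratedDerivWithin (m+1) x (Set.Icc a b)) (Set.Icc a b) :=
    hx.continuousOn_iteratedDerivWithin le_rfl hunique
  have hFTC := intervalIntegral.integral_eq_sub_of_hasDeriv_right_of_le (a := a) (b := t)
    (f := fun y => taylorWithinEval x m (Set.Icc a b) y t)
    (f' := fun y => (((m).factorial : ℝ)⁻¹ * (t - y) ^ m) •
      iteratedDerivWithin (m+1) x (Set.Icc a b) y)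
    ht.1 ?_ ?_ ?_
  · simp only [smul_eq_mul] at hFTC
    rw [hFTC, taylorWithinEval_self, taylor_within_apply]
    congr 1
    apply Finset.sum_congr rfl
    intro k _
    simp [smul_eq_mul, div_eq_mul_inv]
    ring
  · exact (continuousOn_taylorWithinEval hunique hxm).mono
      (Set.Icc_subset_Icc le_rfl ht.2)
  · intro y hy
    have hy' : y ∈ Set.Ioo a b := ⟨hy.1, lt_of_lt_of_le hy.2 ht.2⟩
    exact (taylorWithinEval_hasDerivAt_Ioo t hab hy' hxm hdiff).hasDerivWithinAt
  · apply ContinuousOn.intervalIntegrable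
    apply ContinuousOn.fun_smul
    · exact (continuousOn_const.mul ((continuousOn_const.sub continuousOn_id).pow m))
    · exact hcontN.mono (by rw [Set.uIcc_of_le ht.1]; exact Set.Icc_subset_Icc le_rfl ht.2)

lemma rpow_ii {β c : ℝ} (hβ : 0 < β) (d : ℝ) :
    IntervalIntegrable (fun s => (c - s) ^ (β - 1)) volume d c := by
  have h := (intervalIntegral.intervalIntegrable_rpow' (a := c - d) (b := c - c)
    (show (-1:ℝ) < β - 1 by linarith)).comp_sub_left c
  simpa using h

lemma swap_lemma {α β a t : ℝ} (hα : 0 < α) (hβ : 0 < β) (hat : a < t)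
    {G : ℝ → ℝ} (hG : Continuous G) :
    ∫ τ in a..t, (t - τ) ^ (α - 1) * ∫ s in a..τ, (τ - s) ^ (β - 1) * G s
      = ∫ s in a..t, (∫ τ in s..t, (t - τ) ^ (α - 1) * (τ - s) ^ (β - 1)) * G s := by
  set μ : Measure ℝ := volume.restrict (Set.Ioc a t) with hμ
  set Φ : ℝ → ℝ → ℝ := fun τ s =>
    Set.indicator (Set.Iic τ) (fun s => (t - τ) ^ (α - 1) * ((τ - s) ^ (β - 1) * G s)) s with hΦ
  -- bound for G
  obtain ⟨M, hM⟩ := (isCompact_Icc (a := a) (b := t)).exists_bound_of_continuousOn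
    hG.continuousOn
  have hM0 : 0 ≤ M := le_trans (norm_nonneg _) (hM a (by constructor <;> linarith))
  -- measurability
  have hmeas : AEStronglyMeasurable (Function.uncurry Φ) (μ.prod μ) := by
    have : Function.uncurry Φ = Set.indicator {p : ℝ × ℝ | p.2 ≤ p.1}
        (fun p => (t - p.1) ^ (α - 1) * ((p.1 - p.2) ^ (β - 1) * G p.2)) := by
      funext p
      simp [Function.uncurry, hΦ, Set.indicator_apply, Set.mem_Iic, Set.mem_setOf_eq]
    rw [this]
    apply Measurable.aestronglyMeasurable
    apply Measurable.indicator
    · fun_prop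
    · exact measurableSet_le measurable_snd measurable_fst
  -- integrability in s for fixed τ ∈ Ioc a t
  have hslice : ∀ τ ∈ Set.Ioc a t, Integrable (Φ τ) μ := by
    intro τ hτ
    have hii : IntervalIntegrable
        (fun s => (t - τ) ^ (α - 1) * ((τ - s) ^ (β - 1) * G s)) volume a τ :=
      ((rpow_ii hβ a).mul_continuousOn hG.continuousOn).const_mul _
    have hio : IntegrableOn
        (fun s => (t - τ) ^ (α - 1) * ((τ - s) ^ (β - 1) * G s)) (Set.Ioc a τ) volume :=
      (intervalIntegrable_iff_integrableOn_Ioc_of_le hτ.1.le).mp hii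
    have hinter : Set.Iic τ ∩ Set.Ioc a t = Set.Ioc a τ := by
      ext s
      simp only [Set.mem_inter_iff, Set.mem_Iic, Set.mem_Ioc]
      constructor
      · rintro ⟨h1, h2, h3⟩; exact ⟨h2, h1⟩
      · rintro ⟨h1, h2⟩; exact ⟨h2, h1, le_trans h2 hτ.2⟩
    have : IntegrableOn
        (fun s => (t - τ) ^ (α - 1) * ((τ - s) ^ (β - 1) * G s)) (Set.Iic τ) μ := by
      rw [IntegrableOn, hμ, Measure.restrict_restrict measurableSet_Iic, hinter]
      exact hio
    exact this.integrable_indicator measurableSet_Iic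
  -- the iterated norm integral is bounded
  have hbound : Integrable (fun τ => ∫ s, ‖Φ τ s‖ ∂μ) μ := by
    apply Integrable.mono' (g := fun τ => (t - τ) ^ (α - 1) * (M * ((t - a) ^ β / β)))
    · -- integrability of the dominating function
      have hii : IntervalIntegrable
          (fun τ => (t - τ) ^ (α - 1) * (M * ((t - a) ^ β / β))) volume a t :=
        (rpow_ii hα a).mul_const _
      exact (intervalIntegrable_iff_integrableOn_Ioc_of_le hat.le).mp hii
    · exact hmeas.norm.integral_prod_right'
    · rw [hμ, ae_restrict_iff' measurableSet_Ioc]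
      filter_upwards with τ hτ
      have htτ : 0 ≤ t - τ := by linarith [hτ.2]
      have hτa : 0 < τ - a := by linarith [hτ.1]
      have hinter : Set.Iic τ ∩ Set.Ioc a t = Set.Ioc a τ := by
        ext s
        simp only [Set.mem_inter_iff, Set.mem_Iic, Set.mem_Ioc]
        exact ⟨fun ⟨h1, h2, _⟩ => ⟨h2, h1⟩, fun ⟨h1, h2⟩ => ⟨h2, h1, le_trans h2 hτ.2⟩⟩
      -- majorant
      set m : ℝ → ℝ :=
        Set.indicator (Set.Iic τ) (fun s => (t - τ) ^ (α - 1) * ((τ - s) ^ (β - 1) * M)) with hm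
      have hii : IntervalIntegrable
          (fun s => (t - τ) ^ (α - 1) * ((τ - s) ^ (β - 1) * M)) volume a τ :=
        (((rpow_ii hβ a).mul_const M).const_mul _)
      have hio := (intervalIntegrable_iff_integrableOn_Ioc_of_le hτ.1.le).mp hii
      have hres : IntegrableOn
          (fun s => (t - τ) ^ (α - 1) * ((τ - s) ^ (β - 1) * M)) (Set.Iic τ) μ := by
        rw [IntegrableOn, hμ, Measure.restrict_restrict measurableSet_Iic, hinter]
        exact hio
      have hmint : Integrable m μ := hres.integrable_indicator measurableSet_Iic
      have step1 : ∫ s, ‖Φ τ s‖ ∂μ ≤ ∫ s, m s ∂μ := by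
        apply integral_mono_of_nonneg
        · filter_upwards with s; exact norm_nonneg _
        · exact hmint
        · rw [hμ]
          filter_upwards [ae_restrict_mem measurableSet_Ioc] with s hs
          rw [hΦ, hm]
          simp only [Set.indicator_apply]
          split_ifs with h
          · simp only [Set.mem_Iic] at h
            rw [norm_mul, norm_mul, Real.norm_of_nonneg (Real.rpow_nonneg htτ _),
              Real.norm_of_nonneg (Real.rpow_nonneg (sub_nonneg.2 h) _)]
            exact mul_le_mul_of_nonneg_left
              (mul_le_mul_of_nonneg_left (hM s ⟨hs.1.le, hs.2⟩)
                (Real.rpow_nonneg (sub_nonneg.2 h) _))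
              (Real.rpow_nonneg htτ _)
          · simp
      have hval : ∫ s in a..τ, (τ - s) ^ (β - 1) = (τ - a) ^ β / β := by
        rw [intervalIntegral.integral_comp_sub_left (fun x => x ^ (β - 1)) τ]
        simp only [sub_self]
        rw [integral_rpow (Or.inl (by linarith : (-1:ℝ) < β - 1))]
        rw [show β - 1 + 1 = β by ring, Real.zero_rpow (by linarith : β ≠ 0)]
        ring
      have step2 : ∫ s, m s ∂μ
          = (t - τ) ^ (α - 1) * (((τ - a) ^ β / β) * M) := by
        rw [hm, hμ, MeasureTheory.integral_indicator measurableSet_Iic,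
          Measure.restrict_restrict measurableSet_Iic, hinter,
          ← intervalIntegral.integral_of_le hτ.1.le,
          intervalIntegral.integral_const_mul, intervalIntegral.integral_mul_const, hval]
      have step3 : (t - τ) ^ (α - 1) * (((τ - a) ^ β / β) * M)
          ≤ (t - τ) ^ (α - 1) * (M * ((t - a) ^ β / β)) := by
        rw [show M * ((t - a) ^ β / β) = ((t - a) ^ β / β) * M by ring]
        apply mul_le_mul_of_nonneg_left ?_ (Real.rpow_nonneg htτ _)
        apply mul_le_mul_of_nonneg_right ?_ hM0
        exact div_le_div_of_nonneg_right
          (Real.rpow_le_rpow hτa.le (show τ - a ≤ t - a by linarith [hτ.2]) hβ.le) hβ.le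
      rw [Real.norm_of_nonneg (integral_nonneg fun s => norm_nonneg _)]
      exact (step1.trans_eq step2).trans step3
  -- integrability on the product
  have hint : Integrable (Function.uncurry Φ) (μ.prod μ) := by
    refine (integrable_prod_iff hmeas).mpr ⟨?_, hbound⟩
    rw [hμ]
    filter_upwards [ae_restrict_mem measurableSet_Ioc] with τ hτ
    exact hslice τ hτ
  have hswap := MeasureTheory.integral_integral_swap hint
  have hL : ∫ τ in a..t, (t - τ) ^ (α - 1) * ∫ s in a..τ, (τ - s) ^ (β - 1) * G s
      = ∫ τ, (∫ s, Φ τ s ∂μ) ∂μ := by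
    rw [hμ, intervalIntegral.integral_of_le hat.le]
    apply setIntegral_congr_fun measurableSet_Ioc
    intro τ hτ
    have hinter : Set.Iic τ ∩ Set.Ioc a t = Set.Ioc a τ := by
      ext s
      simp only [Set.mem_inter_iff, Set.mem_Iic, Set.mem_Ioc]
      exact ⟨fun ⟨h1, h2, _⟩ => ⟨h2, h1⟩, fun ⟨h1, h2⟩ => ⟨h2, h1, le_trans h2 hτ.2⟩⟩
    symm
    calc ∫ s, Φ τ s ∂μ
        = ∫ s in Set.Ioc a τ, (t - τ) ^ (α - 1) * ((τ - s) ^ (β - 1) * G s) := by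
          rw [hΦ, hμ, MeasureTheory.integral_indicator measurableSet_Iic,
            Measure.restrict_restrict measurableSet_Iic, hinter]
      _ = ∫ s in a..τ, (t - τ) ^ (α - 1) * ((τ - s) ^ (β - 1) * G s) :=
          (intervalIntegral.integral_of_le hτ.1.le).symm
      _ = (t - τ) ^ (α - 1) * ∫ s in a..τ, (τ - s) ^ (β - 1) * G s :=
          intervalIntegral.integral_const_mul _ _
  have hR : ∫ s, (∫ τ, Φ τ s ∂μ) ∂μ
      = ∫ s in a..t, (∫ τ in s..t, (t - τ) ^ (α - 1) * (τ - s) ^ (β - 1)) * G s := by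
    rw [hμ, intervalIntegral.integral_of_le hat.le]
    apply setIntegral_congr_fun measurableSet_Ioc
    intro s hs
    have hfun : (fun τ => Φ τ s)
        = Set.indicator (Set.Ici s) (fun τ => (t - τ) ^ (α - 1) * ((τ - s) ^ (β - 1) * G s)) := by
      funext τ
      simp [hΦ, Set.indicator_apply, Set.mem_Iic, Set.mem_Ici]
    have hinter : Set.Ici s ∩ Set.Ioc a t = Set.Icc s t := by
      ext τ
      simp only [Set.mem_inter_iff, Set.mem_Ici, Set.mem_Ioc, Set.mem_Icc]
      exact ⟨fun ⟨h1, _, h3⟩ => ⟨h1, h3⟩,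
        fun ⟨h1, h2⟩ => ⟨h1, lt_of_lt_of_le hs.1 h1, h2⟩⟩
    calc ∫ τ, Φ τ s ∂μ
        = ∫ τ in Set.Icc s t, (t - τ) ^ (α - 1) * ((τ - s) ^ (β - 1) * G s) := by
          rw [hfun, hμ, MeasureTheory.integral_indicator measurableSet_Ici,
            Measure.restrict_restrict measurableSet_Ici, hinter]
      _ = ∫ τ in Set.Ioc s t, (t - τ) ^ (α - 1) * ((τ - s) ^ (β - 1) * G s) :=
          MeasureTheory.integral_Icc_eq_integral_Ioc
      _ = ∫ τ in s..t, ((t - τ) ^ (α - 1) * (τ - s) ^ (β - 1)) * G s := by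
          rw [← intervalIntegral.integral_of_le hs.2]
          apply intervalIntegral.integral_congr
          intro τ _
          ring
      _ = (∫ τ in s..t, (t - τ) ^ (α - 1) * (τ - s) ^ (β - 1)) * G s :=
          intervalIntegral.integral_mul_const _ _
  exact hL.trans (hswap.trans hR)

/-- Left Riemann–Liouville fractional integral of order `α` with base point `a`. -/
noncomputable def leftRLI (a α : ℝ) (x : ℝ → ℝ) (t : ℝ) : ℝ :=
  (1 / Real.Gamma α) * ∫ τ in a..t, (t - τ) ^ (α - 1) * x τ

/-- Left Caputo fractional derivative of order `α` (with `n = ⌊α⌋+1`) of a function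
on `[a,b]`, base point `a`. -/
noncomputable def leftCaputo (a b α : ℝ) (n : ℕ) (x : ℝ → ℝ) (t : ℝ) : ℝ :=
  (1 / Real.Gamma ((n : ℝ) - α)) *
    ∫ τ in a..t, (t - τ) ^ ((n : ℝ) - α - 1) * iteratedDerivWithin n x (Set.Icc a b) τ

/-- The left Riemann–Liouville fractional integral of the left Caputo fractional
derivative recovers the function up to its Taylor polynomial at `a`. -/
theorem leftRLI_leftCaputo (a b α : ℝ) (hab : a < b) (hα : 0 < α)
    (n : ℕ) (hn : n = ⌊α⌋₊ + 1)
    (x : ℝ → ℝ) (hx : ContDiffOn ℝ n x (Set.Icc a b)) :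
    ∀ t ∈ Set.Icc a b,
      leftRLI a α (leftCaputo a b α n x) t =
        x t - ∑ k ∈ Finset.range n,
          iteratedDerivWithin k x (Set.Icc a b) a / (Nat.factorial k) * (t - a) ^ k := by
  intro t ht
  have hn0 : 0 < n := by omega
  have hβ : 0 < (n : ℝ) - α := by
    have h1 : α < (n : ℕ) := by
      rw [hn]
      exact_mod_cast Nat.lt_floor_add_one α
    linarith
  rcases eq_or_lt_of_le ht.1 with rfl | hat
  · -- t = a
    simp only [leftRLI, intervalIntegral.integral_same, mul_zero]
    rw [Finset.sum_eq_single_of_mem 0 (Finset.mem_range.mpr hn0)]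
    · simp
    · intro k _ hk
      simp [sub_self, zero_pow hk]
  · -- a < t
    obtain ⟨m, rfl⟩ : ∃ m, n = m + 1 := ⟨n - 1, (Nat.succ_pred_eq_of_pos hn0).symm⟩
    set β : ℝ := ((m + 1 : ℕ) : ℝ) - α with hβdef
    set g : ℝ → ℝ := iteratedDerivWithin (m + 1) x (Set.Icc a b) with hgdef
    have hgc : ContinuousOn g (Set.Icc a b) :=
      hx.continuousOn_iteratedDerivWithin le_rfl (uniqueDiffOn_Icc hab)
    set G : ℝ → ℝ := fun s => g (max a (min s b)) with hGdef
    have hGc : Continuous G := by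
      apply hgc.comp_continuous
      · exact continuous_const.max (continuous_id.min continuous_const)
      · intro s
        exact ⟨le_max_left _ _, max_le hab.le (min_le_right _ _)⟩
    have hGeq : ∀ s ∈ Set.Icc a b, G s = g s := by
      intro s hs
      rw [hGdef]
      simp only [min_eq_left hs.2, max_eq_right hs.1]
    have hΓα : Real.Gamma α ≠ 0 := (Real.Gamma_pos_of_pos hα).ne'
    have hΓβ : Real.Gamma β ≠ 0 := (Real.Gamma_pos_of_pos hβ).ne'
    have hsum : α + β = ((m + 1 : ℕ) : ℝ) := by rw [hβdef]; ring
    have hae : ∀ᵐ (s : ℝ), s ≠ t := by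
      rw [ae_iff]
      have : {s : ℝ | ¬ s ≠ t} = {t} := by ext s; simp
      rw [this, Real.volume_singleton]
    calc leftRLI a α (leftCaputo a b α (m + 1) x) t
        = (1 / Real.Gamma α) * ((1 / Real.Gamma β) *
            ∫ τ in a..t, (t - τ) ^ (α - 1) * ∫ s in a..τ, (τ - s) ^ (β - 1) * G s) := by
          rw [leftRLI]
          congr 1
          rw [← intervalIntegral.integral_const_mul]
          apply intervalIntegral.integral_congr
          intro τ hτ
          rw [Set.uIcc_of_le hat.le] at hτ
          have hinner : ∫ s in a..τ, (τ - s) ^ (β - 1) * iteratedDerivWithin (m + 1) x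
              (Set.Icc a b) s = ∫ s in a..τ, (τ - s) ^ (β - 1) * G s := by
            apply intervalIntegral.integral_congr
            intro s hs
            rw [Set.uIcc_of_le hτ.1] at hs
            show (τ - s) ^ (β - 1) * iteratedDerivWithin (m + 1) x (Set.Icc a b) s
              = (τ - s) ^ (β - 1) * G s
            rw [hGeq s ⟨hs.1, hs.2.trans (hτ.2.trans ht.2)⟩]
          simp only [leftCaputo]
          rw [hinner]
          ring
      _ = (1 / Real.Gamma α) * ((1 / Real.Gamma β) *
            ∫ s in a..t, (∫ τ in s..t, (t - τ) ^ (α - 1) * (τ - s) ^ (β - 1)) * G s) := by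
          rw [swap_lemma hα hβ hat hGc]
      _ = (1 / Real.Gamma α) * ((1 / Real.Gamma β) *
            ∫ s in a..t, (Real.Gamma α * Real.Gamma β / Real.Gamma ((m + 1 : ℕ) : ℝ)) *
              ((t - s) ^ m * G s)) := by
          congr 2
          apply intervalIntegral.integral_congr_ae
          filter_upwards [hae] with s hst hmem
          rw [Set.uIoc_of_le hat.le] at hmem
          have hslt : s < t := lt_of_le_of_ne hmem.2 hst
          rw [kernel_integral hslt hα hβ, hsum,
            show ((m + 1 : ℕ) : ℝ) - 1 = ((m : ℕ) : ℝ) by push_cast; ring,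
            Real.rpow_natCast]
          ring
      _ = ∫ s in a..t, (((m).factorial : ℝ)⁻¹ * (t - s) ^ m) * g s := by
          rw [intervalIntegral.integral_const_mul]
          have hΓn : Real.Gamma ((m + 1 : ℕ) : ℝ) = (m.factorial : ℝ) := by
            push_cast
            exact Real.Gamma_nat_eq_factorial m
          have hcoef : (1 / Real.Gamma α) * ((1 / Real.Gamma β) *
              (Real.Gamma α * Real.Gamma β / Real.Gamma ((m + 1 : ℕ) : ℝ)))
              = ((m).factorial : ℝ)⁻¹ := by
            rw [hΓn]
            field_simp
          rw [show (1 / Real.Gamma α) * ((1 / Real.Gamma β) *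
              ((Real.Gamma α * Real.Gamma β / Real.Gamma ((m + 1 : ℕ) : ℝ)) *
                ∫ s in a..t, (t - s) ^ m * G s))
              = ((1 / Real.Gamma α) * ((1 / Real.Gamma β) *
                (Real.Gamma α * Real.Gamma β / Real.Gamma ((m + 1 : ℕ) : ℝ)))) *
                ∫ s in a..t, (t - s) ^ m * G s by ring, hcoef,
            ← intervalIntegral.integral_const_mul]
          apply intervalIntegral.integral_congr
          intro s hs
          rw [Set.uIcc_of_le hat.le] at hs
          show ((m.factorial : ℝ))⁻¹ * ((t - s) ^ m * G s)
            = ((m.factorial : ℝ)⁻¹ * (t - s) ^ m) * g s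
          rw [hGeq s ⟨hs.1, hs.2.trans ht.2⟩]
          ring
      _ = x t - ∑ k ∈ Finset.range (m + 1),
            iteratedDerivWithin k x (Set.Icc a b) a / (Nat.factorial k) * (t - a) ^ k := by
          have := caputo_taylor_integral_remainder (n := m + 1) (Nat.succ_pos m) hab hx ht
          simp only [Nat.add_sub_cancel] at this
          exact this
end

section
/- Let α ∈ (0,1) and define x̄(t) = 2t^{α+2}/Γ(α+3) and ū(t) = 2t^{α+1}/Γ(α+2) on [0,1]. Then the pair (x̄,ū) is an optimal solution to the problem of minimizing J(x,u) = ∫_0^1 (t u(t) − (α+2) x(t))² dt subject to x'(t) + (^C_0D_t^α x)(t) = u(t) + t² and the boundary conditions x(0)=0, x(1)=2/Γ(3+α). Specifically: (a) x̄'(t) + (^C_0D_t^α x̄)(t) = ū(t) + t² for all t ∈ [0,1]; (b) x̄(0)=0 and x̄(1)=2/Γ(3+α); (c) J(x̄,ū) = 0; and (d) J(x,u) ≥ 0 = J(x̄,ū) for every admissible pair (x ∈ C¹[0,1], u continuous) satisfying the constraint and boundary conditions. -/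
/-- Left Caputo fractional derivative of order `α ∈ (0,1)` with base point `0`. -/
noncomputable def caputoL0 (α : ℝ) (x : ℝ → ℝ) (t : ℝ) : ℝ :=
  (1 / Real.Gamma (1 - α)) * ∫ τ in (0 : ℝ)..t, (t - τ) ^ (-α) * deriv x τ

/-- The cost functional `J(x,u) = ∫_0^1 (t u(t) − (α+2) x(t))² dt`. -/
noncomputable def Jex (α : ℝ) (x u : ℝ → ℝ) : ℝ :=
  ∫ t in (0 : ℝ)..1, (t * u t - (α + 2) * x t) ^ 2

/-- Key integral: `∫_0^t (t-τ)^{-α} τ^{α+1} dτ = t² Γ(α+2) Γ(1-α) / 2` for `t > 0`. -/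
lemma key_integral {α t : ℝ} (hα : α ∈ Set.Ioo (0:ℝ) 1) (ht : 0 < t) :
    (∫ τ in (0:ℝ)..t, (t - τ) ^ (-α) * τ ^ (α + 1)) =
      t ^ 2 * (Real.Gamma (α + 2) * Real.Gamma (1 - α)) / 2 := by
  obtain ⟨hα0, hα1⟩ := hα
  have hs : (0:ℝ) < α + 2 := by linarith
  have hv : (0:ℝ) < 1 - α := by linarith
  have hbeta := Complex.Gamma_mul_Gamma_eq_betaIntegral
    (s := (α:ℂ) + 2) (t := 1 - (α:ℂ)) (by simp [hs]) (by simp; norm_num [hα1])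
  have hscaled := Complex.betaIntegral_scaled ((α:ℂ) + 2) (1 - (α:ℂ)) ht
  have hcongr : (∫ τ in (0:ℝ)..t, (τ:ℂ) ^ ((α:ℂ) + 2 - 1) * ((t:ℝ) - τ) ^ (1 - (α:ℂ) - 1))
      = ∫ τ in (0:ℝ)..t, (((t - τ) ^ (-α) * τ ^ (α + 1) : ℝ) : ℂ) := by
    refine intervalIntegral.integral_congr fun τ hτ => ?_
    rw [Set.uIcc_of_le ht.le] at hτ
    push_cast
    rw [Complex.ofReal_cpow (by linarith [hτ.2]), Complex.ofReal_cpow hτ.1]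
    push_cast
    ring_nf
  have h1 : (∫ τ in (0:ℝ)..t, (((t - τ) ^ (-α) * τ ^ (α + 1) : ℝ) : ℂ))
      = ((∫ τ in (0:ℝ)..t, (t - τ) ^ (-α) * τ ^ (α + 1) : ℝ) : ℂ) :=
    intervalIntegral.integral_ofReal
  have hG3 : Complex.Gamma (((α:ℂ) + 2) + (1 - (α:ℂ))) = 2 := by
    have : ((α:ℂ) + 2) + (1 - (α:ℂ)) = ((2:ℕ) + 1 : ℂ) := by push_cast; ring
    rw [this, Complex.Gamma_nat_eq_factorial]; norm_num
  have hGG : Complex.betaIntegral ((α:ℂ) + 2) (1 - (α:ℂ))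
      = (Real.Gamma (α + 2) * Real.Gamma (1 - α) / 2 : ℝ) := by
    have hb2 : Complex.betaIntegral ((α:ℂ) + 2) (1 - (α:ℂ))
        = Complex.Gamma ((α:ℂ) + 2) * Complex.Gamma (1 - (α:ℂ)) / 2 := by
      rw [hbeta, hG3]; ring
    rw [hb2, show ((α:ℂ) + 2) = ((α + 2 : ℝ) : ℂ) by push_cast; ring,
      show (1 - (α:ℂ)) = ((1 - α : ℝ) : ℂ) by push_cast; ring,
      Complex.Gamma_ofReal, Complex.Gamma_ofReal]
    push_cast; ring
  have hpow : ((t:ℂ)) ^ ((α:ℂ) + 2 + (1 - (α:ℂ)) - 1) = ((t^2 : ℝ) : ℂ) := by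
    have : (α:ℂ) + 2 + (1 - (α:ℂ)) - 1 = ((2:ℕ) : ℂ) := by push_cast; ring
    rw [this, Complex.cpow_natCast]; push_cast; ring
  rw [hcongr, h1, hGG, hpow, ← Complex.ofReal_mul] at hscaled
  rw [Complex.ofReal_inj.mp hscaled]; ring

/-- The pair `x̄(t) = 2t^{α+2}/Γ(α+3)`, `ū(t) = 2t^{α+1}/Γ(α+2)` is an optimal
solution of the fractional optimal control problem
`min ∫_0^1 (tu − (α+2)x)² dt` subject to `x' + ^C_0D^α x = u + t²`,
`x(0) = 0`, `x(1) = 2/Γ(3+α)`. -/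
theorem example_optimal_solution (α : ℝ) (hα : α ∈ Set.Ioo (0 : ℝ) 1) :
    (∀ t ∈ Set.Icc (0 : ℝ) 1,
        deriv (fun s : ℝ => 2 * s ^ (α + 2) / Real.Gamma (α + 3)) t +
          caputoL0 α (fun s : ℝ => 2 * s ^ (α + 2) / Real.Gamma (α + 3)) t =
        2 * t ^ (α + 1) / Real.Gamma (α + 2) + t ^ (2 : ℕ)) ∧
    ((fun s : ℝ => 2 * s ^ (α + 2) / Real.Gamma (α + 3)) 0 = 0 ∧
      (fun s : ℝ => 2 * s ^ (α + 2) / Real.Gamma (α + 3)) 1 = 2 / Real.Gamma (3 + α)) ∧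
    (Jex α (fun s : ℝ => 2 * s ^ (α + 2) / Real.Gamma (α + 3))
        (fun s : ℝ => 2 * s ^ (α + 1) / Real.Gamma (α + 2)) = 0) ∧
    (∀ x u : ℝ → ℝ, ContDiff ℝ 1 x → Continuous u →
      (∀ t ∈ Set.Icc (0 : ℝ) 1,
        deriv x t + caputoL0 α x t = u t + t ^ (2 : ℕ)) →
      x 0 = 0 → x 1 = 2 / Real.Gamma (3 + α) →
      Jex α (fun s : ℝ => 2 * s ^ (α + 2) / Real.Gamma (α + 3))
          (fun s : ℝ => 2 * s ^ (α + 1) / Real.Gamma (α + 2)) ≤ Jex α x u) := by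
  obtain ⟨hα0, hα1⟩ := hα
  have h2pos : (0:ℝ) < α + 2 := by linarith
  have hG2 : (0:ℝ) < Real.Gamma (α + 2) := Real.Gamma_pos_of_pos h2pos
  have hG3pos : (0:ℝ) < Real.Gamma (α + 3) := Real.Gamma_pos_of_pos (by linarith)
  have hG1 : (0:ℝ) < Real.Gamma (1 - α) := Real.Gamma_pos_of_pos (by linarith)
  have hGrec : Real.Gamma (α + 3) = (α + 2) * Real.Gamma (α + 2) := by
    rw [show α + 3 = (α + 2) + 1 by ring, Real.Gamma_add_one (by positivity)]
  -- derivative of x̄ everywhere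
  have hderiv : ∀ τ : ℝ, deriv (fun s : ℝ => 2 * s ^ (α + 2) / Real.Gamma (α + 3)) τ
      = 2 / Real.Gamma (α + 2) * τ ^ (α + 1) := by
    intro τ
    have h := ((Real.hasDerivAt_rpow_const (x := τ) (p := α + 2)
        (Or.inr (by linarith))).const_mul 2).div_const (Real.Gamma (α + 3))
    rw [h.deriv, show α + 2 - 1 = α + 1 by ring, hGrec]
    field_simp
  -- Part (c): J(x̄,ū) = 0
  have hJ0 : Jex α (fun s : ℝ => 2 * s ^ (α + 2) / Real.Gamma (α + 3))
      (fun s : ℝ => 2 * s ^ (α + 1) / Real.Gamma (α + 2)) = 0 := by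
    unfold Jex
    refine (intervalIntegral.integral_congr (g := fun _ : ℝ => (0:ℝ))
      fun t ht => ?_).trans (by simp)
    rw [Set.uIcc_of_le (by norm_num)] at ht
    have hsplit : t ^ (α + 2) = t * t ^ (α + 1) := by
      rw [show α + 2 = 1 + (α + 1) by ring, Real.rpow_add' ht.1 (by linarith),
        Real.rpow_one]
    simp only [hsplit, hGrec]
    field_simp
    ring
  refine ⟨?_, ⟨by simp [Real.zero_rpow (by linarith : α + 2 ≠ 0)],
      by simp [Real.one_rpow, show (3:ℝ) + α = α + 3 by ring]⟩, hJ0,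
    fun x u _ _ _ _ _ => ?_⟩
  · -- Part (a): the dynamics
    intro t ht
    rw [hderiv t]
    unfold caputoL0
    have hint : (∫ τ in (0:ℝ)..t, (t - τ) ^ (-α) *
        deriv (fun s : ℝ => 2 * s ^ (α + 2) / Real.Gamma (α + 3)) τ)
        = 2 / Real.Gamma (α + 2) * ∫ τ in (0:ℝ)..t, (t - τ) ^ (-α) * τ ^ (α + 1) := by
      rw [← intervalIntegral.integral_const_mul]
      refine intervalIntegral.integral_congr fun τ _ => ?_
      rw [hderiv τ]; ring
    rw [hint]
    rcases eq_or_lt_of_le ht.1 with h0 | h0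
    · rw [← h0]
      simp [Real.zero_rpow (by linarith : α + 1 ≠ 0)]
    · rw [key_integral ⟨hα0, hα1⟩ h0]
      have hG1ne : Real.Gamma (1 - α) ≠ 0 := ne_of_gt hG1
      have hG2ne : Real.Gamma (α + 2) ≠ 0 := ne_of_gt hG2
      field_simp
  · -- Part (d): optimality
    rw [hJ0]
    exact intervalIntegral.integral_nonneg (by norm_num) fun t _ => sq_nonneg _
end
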